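/- If $(a_n)_{n\in\mathbb{N}}$ is a strictly increasing sequence of integers that converges to zero in some non-discrete Hausdorff group topology on $\mathbb{Z}$, then $\lim_{n\to\infty}(a_{n+1}-a_n)=\infty$. -/

import Mathlib

open Filter

theorem stmt0 (τ : TopologicalSpace ℤ) (hg : @IsTopologicalAddGroup ℤ τ _)
    (h2 : @T2Space ℤ τ) (hnd : τ ≠ ⊥)
    (a : ℕ → ℤ) (hmono : StrictMono a)
    (hconv : Tendsto a atTop (@nhds ℤ τ 0)) :
    Tendsto (fun n => a (n + 1) - a n) atTop atTop := by
  letI := τ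
  have hd : Tendsto (fun n => a (n + 1) - a n) atTop (nhds (0 : ℤ)) := by
    have h1 : Tendsto (fun n => a (n + 1)) atTop (nhds (0 : ℤ)) :=
      hconv.comp (tendsto_add_atTop_nat 1)
    simpa using h1.sub hconv
  have hge : ∀ n, 1 ≤ a (n + 1) - a n := fun n => by
    have : a n < a (n+1) := hmono (by omega); omega
  rw [tendsto_atTop]
  by_contra hc
  push_neg at hc
  obtain ⟨b, hb⟩ := hc
  have hmem : ∃ᶠ n in atTop, (a (n + 1) - a n) ∈ Finset.Ico (1 : ℤ) b := by
    refine hb.mono fun n hn => ?_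
    rw [Finset.mem_Ico]
    exact ⟨hge n, hn⟩
  have key : ∃ k ∈ Finset.Ico (1 : ℤ) b, ∃ᶠ n in atTop, a (n + 1) - a n = k := by
    by_contra h
    push_neg at h
    have hall : ∀ᶠ n in atTop, ∀ k ∈ Finset.Ico (1 : ℤ) b, a (n + 1) - a n ≠ k := by
      rw [Filter.eventually_all_finset]
      intro k hk
      simpa using h k hk
    obtain ⟨n, hn1, hn2⟩ := (hall.and_frequently hmem).exists
    exact hn1 _ hn2 rfl
  obtain ⟨k, hk, hfk⟩ := key
  haveI hne : (atTop ⊓ 𝓟 {n | a (n + 1) - a n = k}).NeBot :=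
    Filter.frequently_iff_neBot.mp hfk
  have t1 : Tendsto (fun n => a (n + 1) - a n)
      (atTop ⊓ 𝓟 {n | a (n + 1) - a n = k}) (nhds (0 : ℤ)) :=
    hd.mono_left inf_le_left
  have t2 : Tendsto (fun n => a (n + 1) - a n)
      (atTop ⊓ 𝓟 {n | a (n + 1) - a n = k}) (nhds k) := by
    exact Tendsto.congr' (eventually_inf_principal.2
      (Eventually.of_forall fun n hn => hn.symm)) tendsto_const_nhds
  have hk0 : k = 0 := tendsto_nhds_unique t2 t1
  have := (Finset.mem_Ico.mp hk).1
  omega
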